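/- Let μ be a K-Voronoi probability measure on ℝ^D × {0,1} with respect to vectors θ_1, …, θ_K ∈ ℝ^D. Define, for each sign pattern s' ∈ {−1,1}^K, the parameter vector θ*_{s'} = Σ_{k=1}^K s'_k θ_k. Then there exists a function g' : {−1,1}^K → {0,1} such that for μ-almost every (x, z): the map s' ↦ θ*_{s'}ᵀx has a unique maximizer over {−1,1}^K, and z = g'(argmax_{s'∈{−1,1}^K} θ*_{s'}ᵀx). In words, the hard (argmax) predictions of a multiclass linear classifier over the representations determine the protected attribute Z exactly. -/

import Mathlib

open MeasureTheory
open scoped BigOperators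

/-- The score of `x` under the linear classifier with parameter vector
`θ*_{s'} = Σ_k s'_k θ_k`, where the sign pattern `s'` is encoded as a Boolean vector
(`true ↦ +1`, `false ↦ −1`): `f(s') = θ*_{s'}ᵀx = Σ_k s'_k (θ_kᵀx)`. -/
noncomputable def signScore {D K : ℕ} (θ : Fin K → Fin D → ℝ) (x : Fin D → ℝ)
    (s' : Fin K → Bool) : ℝ :=
  ∑ k, (if s' k then (1:ℝ) else -1) * (∑ d, θ k d * x d)

/-- For a `K`-Voronoi probability measure `μ` on `ℝ^D × {0,1}` with respect to
`θ_1, …, θ_K` (μ-a.s. `θ_kᵀx ≠ 0` for all `k`, and the label `z` is a.s. a function `g`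
of the sign pattern of `x`), the hard (argmax) predictions of the multiclass linear
classifier with parameter vectors `θ*_{s'} = Σ_k s'_k θ_k` determine `Z` exactly:
there is `g'` such that μ-a.s. the map `s' ↦ θ*_{s'}ᵀx` has a unique maximizer `s₀`
over `{−1,1}^K` and `z = g'(s₀)`. -/
theorem voronoi_argmax_determines_label
    (D K : ℕ) (μ : Measure ((Fin D → ℝ) × Bool)) [IsProbabilityMeasure μ]
    (θ : Fin K → Fin D → ℝ)
    (hne : ∀ᵐ w ∂μ, ∀ k, (∑ d, θ k d * w.1 d) ≠ 0)
    (g : (Fin K → Bool) → Bool)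
    (hg : ∀ᵐ w ∂μ, w.2 = g (fun k => decide (0 < ∑ d, θ k d * w.1 d))) :
    ∃ g' : (Fin K → Bool) → Bool,
      ∀ᵐ w ∂μ, ∃ s₀ : Fin K → Bool,
        (∀ s' : Fin K → Bool, s' ≠ s₀ → signScore θ w.1 s' < signScore θ w.1 s₀) ∧
        w.2 = g' s₀ := by
  refine ⟨g, ?_⟩
  filter_upwards [hne, hg] with w hw hz
  set a : Fin K → ℝ := fun k => ∑ d, θ k d * w.1 d with ha
  refine ⟨fun k => decide (0 < a k), ?_, hz⟩
  intro s' hs'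
  have hsign : ∀ k, (0 < a k ∧ decide (0 < a k) = true) ∨
      (a k < 0 ∧ decide (0 < a k) = false) := by
    intro k
    rcases (lt_or_gt_of_ne (hw k) : a k < 0 ∨ 0 < a k) with h | h
    · exact Or.inr ⟨h, by simp [not_lt.mpr h.le]⟩
    · exact Or.inl ⟨h, by simp [h]⟩
  have hterm : ∀ k, (if s' k then (1:ℝ) else -1) * a k ≤
      (if decide (0 < a k) then (1:ℝ) else -1) * a k := by
    intro k
    rcases hsign k with ⟨h, hd⟩ | ⟨h, hd⟩ <;> rw [hd] <;>
      cases hs : s' k <;> simp only [Bool.false_eq_true, if_true, if_false] <;> linarith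
  have hex : ∃ k ∈ Finset.univ, (if s' k then (1:ℝ) else -1) * a k <
      (if decide (0 < a k) then (1:ℝ) else -1) * a k := by
    have hexk : ∃ k, s' k ≠ decide (0 < a k) := by
      by_contra hc
      push_neg at hc
      exact hs' (funext hc)
    obtain ⟨k, hk⟩ := hexk
    refine ⟨k, Finset.mem_univ k, ?_⟩
    rcases hsign k with ⟨h, hd⟩ | ⟨h, hd⟩ <;> rw [hd] <;> rw [hd] at hk
    · have : s' k = false := by cases hs : s' k <;> simp_all
      rw [this]
      simp only [if_true, if_false, Bool.false_eq_true]
      linarith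
    · have : s' k = true := by cases hs : s' k <;> simp_all
      rw [this]
      simp only [if_true, if_false, Bool.false_eq_true]
      linarith
  exact Finset.sum_lt_sum (fun k _ => hterm k) hex
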